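/- For every real ε > 0 there exists a real x₀ such that for all real x ≥ x₀ there exists a positive integer m with the following properties: φ(m) ≤ x; m = 2^t · Q for some nonnegative integer t and some odd squarefree positive integer Q; and m ≥ ((1/2)·e^γ − ε) · x · log log x. -/

import Mathlib

/- Auxiliary material for `exists_large_m_two_pow_mul_squarefree`. -/

open Finset

namespace AuxLargeM

def phiOdd (n : ℕ) : ℕ := ∏ p ∈ n.primesBelow.erase 2, (p - 1)


lemma gran_step (a b R : ℝ) (t : ℕ) (ha : 0 < a) (hab : 31*a ≤ 32*b)
    (h1 : (2:ℝ)^t ≤ a*R) (h2 : b*R < 2^t) :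
    (31/32 : ℝ)*R ≤ 2^t/a ∧ (2:ℝ)^t/a ≤ R := by
  have hp : (0:ℝ) < 2^t := by positivity
  have hR0 : 0 < R := by nlinarith
  constructor
  · rw [le_div_iff₀ ha]
    nlinarith
  · rw [div_le_iff₀ ha]
    nlinarith

lemma geom_le (p : ℕ) (hp : 2 ≤ p) (N : ℕ) :
    ∑ k ∈ Finset.range N, ((p:ℝ)⁻¹)^k ≤ (1 - (p:ℝ)⁻¹)⁻¹ := by
  have hp0 : (0:ℝ) < p := by positivity
  have h1 : (p:ℝ)⁻¹ ≤ 1/2 := by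
    rw [inv_le_iff_one_le_mul₀ hp0]
    have : (2:ℝ) ≤ p := by exact_mod_cast hp
    linarith
  have h2 : (0:ℝ) < 1 - (p:ℝ)⁻¹ := by
    have : (0:ℝ) < (p:ℝ)⁻¹ := by positivity
    linarith
  have h3 := geom_sum_mul ((p:ℝ)⁻¹) N
  have h4 : (∑ k ∈ Finset.range N, ((p:ℝ)⁻¹)^k) * (1 - (p:ℝ)⁻¹) = 1 - ((p:ℝ)⁻¹)^N := by
    linear_combination -h3
  rw [show (1 - (p:ℝ)⁻¹)⁻¹ = 1/(1 - (p:ℝ)⁻¹) from inv_eq_one_div _, le_div_iff₀ h2, h4]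
  have : (0:ℝ) ≤ ((p:ℝ)⁻¹)^N := by positivity
  linarith

/-- the finite set of `s`-factored numbers below `N` -/
def Dset (s : Finset ℕ) (N : ℕ) : Finset ℕ :=
  (Finset.range N).filter (fun m => m ≠ 0 ∧ ∀ r ∈ m.primeFactorsList, r ∈ s)

lemma sum_inv_Dset_le (N : ℕ) (s : Finset ℕ) (hs : ∀ p ∈ s, p.Prime) :
    ∑ n ∈ Dset s N, ((n:ℝ))⁻¹ ≤ ∏ p ∈ s, ((1:ℝ) - (p:ℝ)⁻¹)⁻¹ := by
  induction s using Finset.induction_on with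
  | empty =>
    refine le_trans (Finset.sum_le_sum_of_subset_of_nonneg (t := {1}) (fun n hn => ?_)
      (fun i _ _ => by positivity)) ?_
    · simp only [Dset, Finset.mem_filter, Finset.mem_range] at hn
      obtain ⟨-, hn0, hfac⟩ := hn
      have : n.primeFactorsList = [] := by
        refine List.eq_nil_iff_forall_not_mem.mpr (fun r hr => ?_)
        simpa using hfac r hr
      have : n = 1 := by
        rcases (Nat.primeFactorsList_eq_nil n).mp this with h | h
        · exact absurd h hn0
        · exact h
      simp [this]
    · simp
  | @insert p s hpnotin ih =>
    have hpa : p.Prime := hs p (Finset.mem_insert_self p s)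
    have hss : ∀ q ∈ s, q.Prime := fun q hq => hs q (Finset.mem_insert_of_mem hq)
    have hIH := ih hss
    rw [Finset.prod_insert hpnotin]
    have hpdvd : ∀ q ∈ Dset s N, ¬ p ∣ q := by
      intro q hq hdvd
      simp only [Dset, Finset.mem_filter, Finset.mem_range] at hq
      exact hpnotin (hq.2.2 p ((Nat.mem_primeFactorsList hq.2.1).mpr ⟨hpa, hdvd⟩))
    have hsub : Dset (insert p s) N ⊆
        ((Finset.range N) ×ˢ Dset s N).image (fun kq => p ^ kq.1 * kq.2) := by
      intro n hn
      simp only [Dset, Finset.mem_filter, Finset.mem_range] at hn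
      obtain ⟨hnN, hn0, hfac⟩ := hn
      have hqk : p ^ n.factorization p * (n / p ^ n.factorization p) = n :=
        Nat.ordProj_mul_ordCompl_eq_self n p
      have hpq : ¬ p ∣ (n / p ^ n.factorization p) := Nat.not_dvd_ordCompl hpa hn0
      have hq0 : (n / p ^ n.factorization p) ≠ 0 := (Nat.ordCompl_pos p hn0).ne'
      refine Finset.mem_image.mpr ⟨(n.factorization p, n / p ^ n.factorization p),
        Finset.mem_product.mpr ⟨?_, ?_⟩, hqk⟩
      · refine Finset.mem_range.mpr ?_
        have ha : p ^ n.factorization p ≤ n := Nat.ordProj_le p hn0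
        have hb : n.factorization p < 2 ^ n.factorization p := Nat.lt_two_pow_self
        have hcc : 2 ^ n.factorization p ≤ p ^ n.factorization p :=
          Nat.pow_le_pow_left hpa.two_le _
        omega
      · simp only [Dset, Finset.mem_filter, Finset.mem_range]
        refine ⟨?_, hq0, ?_⟩
        · have : n / p ^ n.factorization p ≤ n := Nat.div_le_self _ _
          omega
        · intro r hr
          have hrp : r.Prime := Nat.prime_of_mem_primeFactorsList hr
          have hrq : r ∣ n / p ^ n.factorization p := Nat.dvd_of_mem_primeFactorsList hr
          have hrn : r ∣ n := hrq.trans (Nat.div_dvd_of_dvd (Nat.ordProj_dvd n p))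
          have hrmem : r ∈ insert p s := hfac r ((Nat.mem_primeFactorsList hn0).mpr ⟨hrp, hrn⟩)
          rcases Finset.mem_insert.mp hrmem with h | h
          · exact absurd (h ▸ hrq) hpq
          · exact h
    have hinj : ∀ x ∈ (Finset.range N) ×ˢ Dset s N, ∀ y ∈ (Finset.range N) ×ˢ Dset s N,
        (fun kq : ℕ × ℕ => p ^ kq.1 * kq.2) x = (fun kq : ℕ × ℕ => p ^ kq.1 * kq.2) y → x = y := by
      rintro ⟨k1, q1⟩ hx ⟨k2, q2⟩ hy heq
      simp only at heq
      have hq1 : q1 ∈ Dset s N := (Finset.mem_product.mp hx).2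
      have hq2 : q2 ∈ Dset s N := (Finset.mem_product.mp hy).2
      have hq10 : q1 ≠ 0 := by
        simp only [Dset, Finset.mem_filter] at hq1; exact hq1.2.1
      have hq20 : q2 ≠ 0 := by
        simp only [Dset, Finset.mem_filter] at hq2; exact hq2.2.1
      have hk : k1 = k2 := by
        have e1 : (p ^ k1 * q1).factorization p = k1 := by
          rw [Nat.factorization_mul (pow_ne_zero _ hpa.pos.ne') hq10]
          simp [hpa.factorization_pow, Nat.factorization_eq_zero_of_not_dvd (hpdvd q1 hq1)]
        have e2 : (p ^ k2 * q2).factorization p = k2 := by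
          rw [Nat.factorization_mul (pow_ne_zero _ hpa.pos.ne') hq20]
          simp [hpa.factorization_pow, Nat.factorization_eq_zero_of_not_dvd (hpdvd q2 hq2)]
        rw [← e1, heq, e2]
      subst hk
      have hq : q1 = q2 := Nat.eq_of_mul_eq_mul_left (pow_pos hpa.pos k1) heq
      rw [hq]
    calc ∑ n ∈ Dset (insert p s) N, ((n:ℝ))⁻¹
        ≤ ∑ n ∈ (((Finset.range N) ×ˢ Dset s N).image (fun kq => p ^ kq.1 * kq.2) : Finset ℕ),
            ((n:ℝ))⁻¹ :=
          Finset.sum_le_sum_of_subset_of_nonneg hsub (fun i _ _ => by positivity)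
      _ = ∑ k ∈ Finset.range N, ∑ q ∈ Dset s N, ((p:ℝ)⁻¹)^k * ((q:ℝ))⁻¹ := by
          rw [Finset.sum_image hinj, Finset.sum_product]
          refine Finset.sum_congr rfl (fun k _ => Finset.sum_congr rfl (fun q _ => ?_))
          push_cast
          rw [mul_inv, inv_pow]
      _ = (∑ k ∈ Finset.range N, ((p:ℝ)⁻¹)^k) * (∑ q ∈ Dset s N, ((q:ℝ))⁻¹) := by
          rw [Finset.sum_mul_sum]
      _ ≤ (1 - (p:ℝ)⁻¹)⁻¹ * ∏ q ∈ s, ((1:ℝ) - (q:ℝ)⁻¹)⁻¹ := by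
          refine mul_le_mul (geom_le p hpa.two_le N) hIH ?_ ?_
          · refine Finset.sum_nonneg (fun q _ => by positivity)
          · have h2 : (0:ℝ) < 1 - (p:ℝ)⁻¹ := by
              have hp2 : (2:ℝ) ≤ p := by exact_mod_cast hpa.two_le
              have : (p:ℝ)⁻¹ ≤ 1/2 := by
                rw [inv_le_iff_one_le_mul₀ (by linarith)]
                linarith
              linarith
            positivity

lemma log_le_prod_primesBelow (n : ℕ) (hn : 1 ≤ n) :
    Real.log n ≤ ∏ p ∈ n.primesBelow, ((1:ℝ) - (p:ℝ)⁻¹)⁻¹ := by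
  have h1 : Real.log n ≤ ((harmonic (n-1) : ℚ) : ℝ) := by
    have h := log_add_one_le_harmonic (n-1)
    rwa [Nat.sub_add_cancel hn] at h
  have h2 : ((harmonic (n-1) : ℚ) : ℝ) = ∑ i ∈ Finset.Icc 1 (n-1), ((i:ℝ))⁻¹ := by
    rw [harmonic_eq_sum_Icc]
    push_cast
    rfl
  have h3 : Finset.Icc 1 (n-1) ⊆ Dset n.primesBelow n := by
    intro m hm
    rw [Finset.mem_Icc] at hm
    refine Finset.mem_filter.mpr ⟨Finset.mem_range.mpr (by omega), by omega, fun r hr => ?_⟩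
    have hrp : r.Prime := Nat.prime_of_mem_primeFactorsList hr
    have hrm : r ∣ m := Nat.dvd_of_mem_primeFactorsList hr
    have : r ≤ m := Nat.le_of_dvd (by omega) hrm
    exact Nat.mem_primesBelow.mpr ⟨by omega, hrp⟩
  calc Real.log n ≤ ∑ i ∈ Finset.Icc 1 (n-1), ((i:ℝ))⁻¹ := h2 ▸ h1
    _ ≤ ∑ m ∈ Dset n.primesBelow n, ((m:ℝ))⁻¹ :=
        Finset.sum_le_sum_of_subset_of_nonneg h3 (fun i _ _ => by positivity)
    _ ≤ ∏ p ∈ n.primesBelow, ((1:ℝ) - (p:ℝ)⁻¹)⁻¹ :=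
        sum_inv_Dset_le n n.primesBelow (fun p hp => Nat.prime_of_mem_primesBelow hp)

lemma totient_prod_primes (s : Finset ℕ) (hs : ∀ p ∈ s, p.Prime) :
    (∏ p ∈ s, p).totient = ∏ p ∈ s, (p - 1) := by
  induction s using Finset.induction_on with
  | empty => simp
  | @insert p s hpnotin ih =>
    have hpa : p.Prime := hs p (Finset.mem_insert_self p s)
    have hss : ∀ q ∈ s, q.Prime := fun q hq => hs q (Finset.mem_insert_of_mem hq)
    have hcop : Nat.Coprime p (∏ q ∈ s, q) := by
      refine Nat.Coprime.prod_right (fun q hq => ?_)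
      exact (Nat.coprime_primes hpa (hss q hq)).mpr (fun h => hpnotin (h ▸ hq))
    rw [Finset.prod_insert hpnotin, Finset.prod_insert hpnotin,
      Nat.totient_mul hcop, ih hss, Nat.totient_prime hpa]

lemma squarefree_prod_primes (s : Finset ℕ) (hs : ∀ p ∈ s, p.Prime) :
    Squarefree (∏ p ∈ s, p) := by
  induction s using Finset.induction_on with
  | empty => simpa using squarefree_one
  | @insert p s hpnotin ih =>
    have hpa : p.Prime := hs p (Finset.mem_insert_self p s)
    have hss : ∀ q ∈ s, q.Prime := fun q hq => hs q (Finset.mem_insert_of_mem hq)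
    have hcop : Nat.Coprime p (∏ q ∈ s, q) := by
      refine Nat.Coprime.prod_right (fun q hq => ?_)
      exact (Nat.coprime_primes hpa (hss q hq)).mpr (fun h => hpnotin (h ▸ hq))
    rw [Finset.prod_insert hpnotin]
    exact (Nat.squarefree_mul hcop).mpr ⟨hpa.squarefree, ih hss⟩

lemma odd_prod_primes (s : Finset ℕ) (hs : ∀ p ∈ s, Odd p) : Odd (∏ p ∈ s, p) :=
  Finset.prod_induction _ Odd (fun _ _ => Odd.mul) odd_one hs

lemma exp_gamma_le : Real.exp Real.eulerMascheroniConstant ≤ 1.84 := by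
  have h50 := Real.eulerMascheroniConstant_lt_eulerMascheroniSeq' 50
  have hseq : Real.eulerMascheroniSeq' 50 = ((harmonic 50 : ℚ) : ℝ) - Real.log 50 := by
    rw [Real.eulerMascheroniSeq']
    norm_num
  have hexp1 : Real.exp 1 ≤ 2.7182818286 := Real.exp_one_lt_d9.le
  have hexp1' : (0:ℝ) < Real.exp 1 := Real.exp_pos 1
  have he4 : Real.exp 4 ≤ 54.599 := by
    have h : Real.exp 4 = (Real.exp 1)^4 := by
      rw [← Real.exp_nat_mul]; norm_num
    rw [h]
    calc (Real.exp 1)^4 ≤ 2.7182818286^4 := by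
          exact pow_le_pow_left₀ hexp1'.le hexp1 4
      _ ≤ 54.599 := by norm_num
  have h01 : (1.1:ℝ) ≤ Real.exp 0.1 := by
    have := Real.add_one_le_exp (0.1:ℝ)
    linarith
  have h39 : Real.exp (39/10 : ℝ) ≤ 50 := by
    have hmul : Real.exp (39/10 : ℝ) * Real.exp (0.1:ℝ) = Real.exp 4 := by
      rw [← Real.exp_add]; norm_num
    nlinarith [Real.exp_pos (39/10 : ℝ)]
  have hlog50 : (39/10 : ℝ) ≤ Real.log 50 := by
    rw [Real.le_log_iff_exp_le (by norm_num : (0:ℝ) < 50)]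
    exact h39
  have hH50 : ((harmonic 50 : ℚ) : ℝ) ≤ 4.4993 := by
    have h : (harmonic 50 : ℚ) ≤ 4.4993 := by
      norm_num [harmonic, Finset.sum_range_succ]
    calc ((harmonic 50 : ℚ) : ℝ) ≤ ((4.4993 : ℚ) : ℝ) := by exact_mod_cast h
      _ = 4.4993 := by norm_num
  have hγ : Real.eulerMascheroniConstant ≤ 0.6 := by
    rw [hseq] at h50
    linarith
  have h06 : Real.exp 0.6 ≤ 1.84 := by
    have h5 : (Real.exp 0.6)^5 = Real.exp 3 := by
      rw [← Real.exp_nat_mul]; norm_num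
    have h3 : Real.exp 3 ≤ 20.09 := by
      have h : Real.exp 3 = (Real.exp 1)^3 := by
        rw [← Real.exp_nat_mul]; norm_num
      rw [h]
      calc (Real.exp 1)^3 ≤ 2.7182818286^3 := pow_le_pow_left₀ hexp1'.le hexp1 3
        _ ≤ 20.09 := by norm_num
    by_contra hcon
    push_neg at hcon
    have : (1.84:ℝ)^5 < (Real.exp 0.6)^5 :=
      pow_lt_pow_left₀ hcon (by norm_num) (by norm_num)
    rw [h5] at this
    norm_num at this
    linarith
  exact le_trans (Real.exp_le_exp.mpr hγ) h06


lemma gran (R : ℝ) (hR : (2:ℝ)^18 ≤ R) :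
    ∃ t d : ℕ, 0 < d ∧
      (d = 1 ∨ ∃ p : ℕ, p.Prime ∧ p ≠ 2 ∧ 2^16 < p ∧ p < 2^17 ∧ d = p - 1) ∧
      (31/32 : ℝ) * R ≤ 2^t / d ∧ (2:ℝ)^t / d ≤ R := by
  have hR0 : (0:ℝ) < R := lt_of_lt_of_le (by positivity) hR
  set k := ⌊R⌋₊ with hkdef
  have hk2 : 2^18 ≤ k := Nat.le_floor (by exact_mod_cast hR)
  set u := Nat.log 2 k with hudef
  have h1 : (2:ℝ)^u ≤ R := by
    have h := Nat.pow_log_le_self 2 (show k ≠ 0 by omega)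
    have h2 : ((2^u : ℕ) : ℝ) ≤ (k : ℝ) := by exact_mod_cast h
    calc (2:ℝ)^u = ((2^u : ℕ) : ℝ) := by push_cast; ring
    _ ≤ (k:ℝ) := h2
    _ ≤ R := Nat.floor_le hR0.le
  have h2 : R < (2:ℝ)^(u+1) := by
    have h := Nat.lt_pow_succ_log_self (show 1 < 2 by norm_num) k
    have h' : (k:ℝ) + 1 ≤ (2:ℝ)^(u+1) := by
      have : ((k+1 : ℕ) : ℝ) ≤ ((2^(u+1) : ℕ) : ℝ) := by exact_mod_cast h
      push_cast at this; linarith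
    calc R < (k:ℝ) + 1 := Nat.lt_floor_add_one R
    _ ≤ (2:ℝ)^(u+1) := h'
  by_cases hc1 : (126988:ℝ) * R < 2^(u+17)
  · obtain ⟨g1, g2⟩ := gran_step (131072:ℝ) (126988:ℝ) R (u+17) (by norm_num) (by norm_num) (by rw [pow_add]; nlinarith : (2:ℝ)^(u+17) ≤ (131072:ℝ) * R) hc1
    refine ⟨u, 1, one_pos, Or.inl rfl, ?_, ?_⟩
    · push_cast
      rw [div_one]
      have he : (2:ℝ)^(u+17) / 131072 = 2^u := by
        rw [pow_add]; norm_num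
      rw [he] at g1; exact g1
    · push_cast
      rw [div_one]
      have he : (2:ℝ)^(u+17) / 131072 = 2^u := by
        rw [pow_add]; norm_num
      rw [he] at g2; exact g2
  by_cases hc2 : (123030:ℝ) * R < 2^(u+17)
  · obtain ⟨g1, g2⟩ := gran_step (126988:ℝ) (123030:ℝ) R (u+17) (by norm_num) (by norm_num) (not_lt.mp hc1) hc2
    refine ⟨u+17, 126988, by norm_num, Or.inr ⟨126989, by norm_num, by norm_num, by norm_num, by norm_num, by norm_num⟩, ?_, ?_⟩
    · push_cast; exact g1
    · push_cast; exact g2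
  by_cases hc3 : (119190:ℝ) * R < 2^(u+17)
  · obtain ⟨g1, g2⟩ := gran_step (123030:ℝ) (119190:ℝ) R (u+17) (by norm_num) (by norm_num) (not_lt.mp hc2) hc3
    refine ⟨u+17, 123030, by norm_num, Or.inr ⟨123031, by norm_num, by norm_num, by norm_num, by norm_num, by norm_num⟩, ?_, ?_⟩
    · push_cast; exact g1
    · push_cast; exact g2
  by_cases hc4 : (115468:ℝ) * R < 2^(u+17)
  · obtain ⟨g1, g2⟩ := gran_step (119190:ℝ) (115468:ℝ) R (u+17) (by norm_num) (by norm_num) (not_lt.mp hc3) hc4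
    refine ⟨u+17, 119190, by norm_num, Or.inr ⟨119191, by norm_num, by norm_num, by norm_num, by norm_num, by norm_num⟩, ?_, ?_⟩
    · push_cast; exact g1
    · push_cast; exact g2
  by_cases hc5 : (111862:ℝ) * R < 2^(u+17)
  · obtain ⟨g1, g2⟩ := gran_step (115468:ℝ) (111862:ℝ) R (u+17) (by norm_num) (by norm_num) (not_lt.mp hc4) hc5
    refine ⟨u+17, 115468, by norm_num, Or.inr ⟨115469, by norm_num, by norm_num, by norm_num, by norm_num, by norm_num⟩, ?_, ?_⟩
    · push_cast; exact g1
    · push_cast; exact g2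
  by_cases hc6 : (108376:ℝ) * R < 2^(u+17)
  · obtain ⟨g1, g2⟩ := gran_step (111862:ℝ) (108376:ℝ) R (u+17) (by norm_num) (by norm_num) (not_lt.mp hc5) hc6
    refine ⟨u+17, 111862, by norm_num, Or.inr ⟨111863, by norm_num, by norm_num, by norm_num, by norm_num, by norm_num⟩, ?_, ?_⟩
    · push_cast; exact g1
    · push_cast; exact g2
  by_cases hc7 : (104998:ℝ) * R < 2^(u+17)
  · obtain ⟨g1, g2⟩ := gran_step (108376:ℝ) (104998:ℝ) R (u+17) (by norm_num) (by norm_num) (not_lt.mp hc6) hc7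
    refine ⟨u+17, 108376, by norm_num, Or.inr ⟨108377, by norm_num, by norm_num, by norm_num, by norm_num, by norm_num⟩, ?_, ?_⟩
    · push_cast; exact g1
    · push_cast; exact g2
  by_cases hc8 : (101718:ℝ) * R < 2^(u+17)
  · obtain ⟨g1, g2⟩ := gran_step (104998:ℝ) (101718:ℝ) R (u+17) (by norm_num) (by norm_num) (not_lt.mp hc7) hc8
    refine ⟨u+17, 104998, by norm_num, Or.inr ⟨104999, by norm_num, by norm_num, by norm_num, by norm_num, by norm_num⟩, ?_, ?_⟩
    · push_cast; exact g1
    · push_cast; exact g2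
  by_cases hc9 : (98542:ℝ) * R < 2^(u+17)
  · obtain ⟨g1, g2⟩ := gran_step (101718:ℝ) (98542:ℝ) R (u+17) (by norm_num) (by norm_num) (not_lt.mp hc8) hc9
    refine ⟨u+17, 101718, by norm_num, Or.inr ⟨101719, by norm_num, by norm_num, by norm_num, by norm_num, by norm_num⟩, ?_, ?_⟩
    · push_cast; exact g1
    · push_cast; exact g2
  by_cases hc10 : (95466:ℝ) * R < 2^(u+17)
  · obtain ⟨g1, g2⟩ := gran_step (98542:ℝ) (95466:ℝ) R (u+17) (by norm_num) (by norm_num) (not_lt.mp hc9) hc10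
    refine ⟨u+17, 98542, by norm_num, Or.inr ⟨98543, by norm_num, by norm_num, by norm_num, by norm_num, by norm_num⟩, ?_, ?_⟩
    · push_cast; exact g1
    · push_cast; exact g2
  by_cases hc11 : (92488:ℝ) * R < 2^(u+17)
  · obtain ⟨g1, g2⟩ := gran_step (95466:ℝ) (92488:ℝ) R (u+17) (by norm_num) (by norm_num) (not_lt.mp hc10) hc11
    refine ⟨u+17, 95466, by norm_num, Or.inr ⟨95467, by norm_num, by norm_num, by norm_num, by norm_num, by norm_num⟩, ?_, ?_⟩
    · push_cast; exact g1
    · push_cast; exact g2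
  by_cases hc12 : (89598:ℝ) * R < 2^(u+17)
  · obtain ⟨g1, g2⟩ := gran_step (92488:ℝ) (89598:ℝ) R (u+17) (by norm_num) (by norm_num) (not_lt.mp hc11) hc12
    refine ⟨u+17, 92488, by norm_num, Or.inr ⟨92489, by norm_num, by norm_num, by norm_num, by norm_num, by norm_num⟩, ?_, ?_⟩
    · push_cast; exact g1
    · push_cast; exact g2
  by_cases hc13 : (86812:ℝ) * R < 2^(u+17)
  · obtain ⟨g1, g2⟩ := gran_step (89598:ℝ) (86812:ℝ) R (u+17) (by norm_num) (by norm_num) (not_lt.mp hc12) hc13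
    refine ⟨u+17, 89598, by norm_num, Or.inr ⟨89599, by norm_num, by norm_num, by norm_num, by norm_num, by norm_num⟩, ?_, ?_⟩
    · push_cast; exact g1
    · push_cast; exact g2
  by_cases hc14 : (84120:ℝ) * R < 2^(u+17)
  · obtain ⟨g1, g2⟩ := gran_step (86812:ℝ) (84120:ℝ) R (u+17) (by norm_num) (by norm_num) (not_lt.mp hc13) hc14
    refine ⟨u+17, 86812, by norm_num, Or.inr ⟨86813, by norm_num, by norm_num, by norm_num, by norm_num, by norm_num⟩, ?_, ?_⟩
    · push_cast; exact g1
    · push_cast; exact g2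
  by_cases hc15 : (81508:ℝ) * R < 2^(u+17)
  · obtain ⟨g1, g2⟩ := gran_step (84120:ℝ) (81508:ℝ) R (u+17) (by norm_num) (by norm_num) (not_lt.mp hc14) hc15
    refine ⟨u+17, 84120, by norm_num, Or.inr ⟨84121, by norm_num, by norm_num, by norm_num, by norm_num, by norm_num⟩, ?_, ?_⟩
    · push_cast; exact g1
    · push_cast; exact g2
  by_cases hc16 : (78976:ℝ) * R < 2^(u+17)
  · obtain ⟨g1, g2⟩ := gran_step (81508:ℝ) (78976:ℝ) R (u+17) (by norm_num) (by norm_num) (not_lt.mp hc15) hc16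
    refine ⟨u+17, 81508, by norm_num, Or.inr ⟨81509, by norm_num, by norm_num, by norm_num, by norm_num, by norm_num⟩, ?_, ?_⟩
    · push_cast; exact g1
    · push_cast; exact g2
  by_cases hc17 : (76510:ℝ) * R < 2^(u+17)
  · obtain ⟨g1, g2⟩ := gran_step (78976:ℝ) (76510:ℝ) R (u+17) (by norm_num) (by norm_num) (not_lt.mp hc16) hc17
    refine ⟨u+17, 78976, by norm_num, Or.inr ⟨78977, by norm_num, by norm_num, by norm_num, by norm_num, by norm_num⟩, ?_, ?_⟩
    · push_cast; exact g1
    · push_cast; exact g2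
  by_cases hc18 : (74130:ℝ) * R < 2^(u+17)
  · obtain ⟨g1, g2⟩ := gran_step (76510:ℝ) (74130:ℝ) R (u+17) (by norm_num) (by norm_num) (not_lt.mp hc17) hc18
    refine ⟨u+17, 76510, by norm_num, Or.inr ⟨76511, by norm_num, by norm_num, by norm_num, by norm_num, by norm_num⟩, ?_, ?_⟩
    · push_cast; exact g1
    · push_cast; exact g2
  by_cases hc19 : (71820:ℝ) * R < 2^(u+17)
  · obtain ⟨g1, g2⟩ := gran_step (74130:ℝ) (71820:ℝ) R (u+17) (by norm_num) (by norm_num) (not_lt.mp hc18) hc19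
    refine ⟨u+17, 74130, by norm_num, Or.inr ⟨74131, by norm_num, by norm_num, by norm_num, by norm_num, by norm_num⟩, ?_, ?_⟩
    · push_cast; exact g1
    · push_cast; exact g2
  by_cases hc20 : (69592:ℝ) * R < 2^(u+17)
  · obtain ⟨g1, g2⟩ := gran_step (71820:ℝ) (69592:ℝ) R (u+17) (by norm_num) (by norm_num) (not_lt.mp hc19) hc20
    refine ⟨u+17, 71820, by norm_num, Or.inr ⟨71821, by norm_num, by norm_num, by norm_num, by norm_num, by norm_num⟩, ?_, ?_⟩
    · push_cast; exact g1
    · push_cast; exact g2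
  by_cases hc21 : (67420:ℝ) * R < 2^(u+17)
  · obtain ⟨g1, g2⟩ := gran_step (69592:ℝ) (67420:ℝ) R (u+17) (by norm_num) (by norm_num) (not_lt.mp hc20) hc21
    refine ⟨u+17, 69592, by norm_num, Or.inr ⟨69593, by norm_num, by norm_num, by norm_num, by norm_num, by norm_num⟩, ?_, ?_⟩
    · push_cast; exact g1
    · push_cast; exact g2
  by_cases hc22 : (65536:ℝ) * R < 2^(u+17)
  · obtain ⟨g1, g2⟩ := gran_step (67420:ℝ) (65536:ℝ) R (u+17) (by norm_num) (by norm_num) (not_lt.mp hc21) hc22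
    refine ⟨u+17, 67420, by norm_num, Or.inr ⟨67421, by norm_num, by norm_num, by norm_num, by norm_num, by norm_num⟩, ?_, ?_⟩
    · push_cast; exact g1
    · push_cast; exact g2
  · exfalso
    have hlast : (2:ℝ)^(u+17) ≤ 65536 * R := not_lt.mp hc22
    rw [show u+17 = (u+1)+16 by ring, pow_add] at hlast
    nlinarith [pow_pos (show (0:ℝ)<2 by norm_num) (u+1)]
lemma core (n t d : ℕ) (hn1 : 1 ≤ n) (hd0 : 0 < d) (x : ℝ) (hx0 : 0 < x)
    (S : Finset ℕ) (hSp : ∀ p ∈ S, p.Prime) (hS2 : ∀ p ∈ S, p ≠ 2)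
    (hprod : d * ∏ p ∈ S, (p - 1) = phiOdd n)
    (hFpos : 0 < phiOdd n)
    (hlo : (31/32 : ℝ) * (x / (phiOdd n : ℝ)) ≤ 2^t / (d:ℝ))
    (hhi : (2:ℝ)^t / (d:ℝ) ≤ x / (phiOdd n : ℝ))
    (hG : (999/1000 : ℝ) * Real.log n ≤ 2 * ∏ p ∈ S, ((1:ℝ) - (p:ℝ)⁻¹)⁻¹) :
    ∃ m : ℕ, 0 < m ∧ (Nat.totient m : ℝ) ≤ x ∧
      (∃ t' Q : ℕ, 0 < Q ∧ Odd Q ∧ Squarefree Q ∧ m = 2 ^ t' * Q) ∧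
      (31/32 : ℝ) * x * ((999/1000 : ℝ) * Real.log n) ≤ m := by
  set Q := ∏ p ∈ S, p with hQ
  have hQpos : 0 < Q := Finset.prod_pos (fun p hp => (hSp p hp).pos)
  have hQodd : Odd Q := odd_prod_primes S (fun p hp => (hSp p hp).odd_of_ne_two (hS2 p hp))
  have hQsf : Squarefree Q := squarefree_prod_primes S hSp
  have hφQ : Q.totient = ∏ p ∈ S, (p - 1) := totient_prod_primes S hSp
  have h2Q : ¬ (2 ∣ Q) := by
    intro h
    rcases hQodd with ⟨c, hc⟩
    omega
  have hcop : Nat.Coprime (2^(t+1)) Q :=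
    Nat.Coprime.pow_left _ ((Nat.Prime.coprime_iff_not_dvd Nat.prime_two).mpr h2Q)
  have hφm : (2^(t+1) * Q).totient = 2^t * Q.totient := by
    rw [Nat.totient_mul hcop, Nat.totient_prime_pow Nat.prime_two (Nat.succ_pos t)]
    simp
  have hdR : (0:ℝ) < (d:ℝ) := by exact_mod_cast hd0
  have hFR : (0:ℝ) < (phiOdd n : ℝ) := by exact_mod_cast hFpos
  have hprodR : (d:ℝ) * ((∏ p ∈ S, (p-1) : ℕ) : ℝ) = (phiOdd n : ℝ) := by exact_mod_cast hprod
  have hφmR : ((2^(t+1) * Q).totient : ℝ) = 2^t * (phiOdd n : ℝ) / d := by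
    rw [hφm, hφQ, eq_div_iff hdR.ne']
    push_cast
    push_cast at hprodR
    linear_combination (2:ℝ)^t * hprodR
  refine ⟨2^(t+1) * Q, by positivity, ?_, ⟨t+1, Q, hQpos, hQodd, hQsf, rfl⟩, ?_⟩
  · -- totient ≤ x
    rw [hφmR]
    have h := mul_le_mul_of_nonneg_right hhi hFR.le
    rw [div_mul_cancel₀ _ hFR.ne'] at h
    calc (2:ℝ)^t * (phiOdd n : ℝ) / d = (2^t/(d:ℝ)) * (phiOdd n : ℝ) := by ring
      _ ≤ x := h
  · -- lower bound
    have hφlo : (31/32:ℝ) * x ≤ ((2^(t+1) * Q).totient : ℝ) := by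
      rw [hφmR]
      have h := mul_le_mul_of_nonneg_right hlo hFR.le
      calc (31/32:ℝ)*x = (31/32) * (x / (phiOdd n:ℝ)) * (phiOdd n:ℝ) := by
            rw [mul_assoc, div_mul_cancel₀ _ hFR.ne']
        _ ≤ (2^t/(d:ℝ)) * (phiOdd n:ℝ) := h
        _ = 2^t * (phiOdd n:ℝ) / d := by ring
    have hcastQm1 : ((∏ p ∈ S, (p-1) : ℕ) : ℝ) = ∏ p ∈ S, ((p:ℝ) - 1) := by
      rw [Nat.cast_prod]
      refine Finset.prod_congr rfl (fun p hp => ?_)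
      have h2 := (hSp p hp).two_le
      have : ((p - 1 : ℕ) : ℝ) = (p:ℝ) - 1 := by
        push_cast [Nat.cast_sub (by omega : 1 ≤ p)]
        ring
      exact this
    have hfac : ∀ p ∈ S, (p:ℝ) = ((p:ℝ) - 1) * ((1:ℝ) - (p:ℝ)⁻¹)⁻¹ := by
      intro p hp
      have h2 : (2:ℝ) ≤ (p:ℝ) := by exact_mod_cast (hSp p hp).two_le
      have h0 : (p:ℝ) ≠ 0 := by linarith
      have hne : (p:ℝ) - 1 ≠ 0 := by linarith
      have hinv : ((1:ℝ) - (p:ℝ)⁻¹) = ((p:ℝ) - 1)/p := by field_simp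
      rw [hinv, inv_div]
      field_simp
    have hQR : (Q:ℝ) = ((∏ p ∈ S, (p-1) : ℕ) : ℝ) * ∏ p ∈ S, ((1:ℝ) - (p:ℝ)⁻¹)⁻¹ := by
      rw [hcastQm1, ← Finset.prod_mul_distrib, hQ, Nat.cast_prod]
      exact Finset.prod_congr rfl hfac
    have hmval : ((2^(t+1) * Q : ℕ) : ℝ)
        = ((2^(t+1) * Q).totient : ℝ) * (2 * ∏ p ∈ S, ((1:ℝ) - (p:ℝ)⁻¹)⁻¹) := by
      rw [hφm, hφQ]
      push_cast
      push_cast at hQR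
      rw [hQR]
      ring
    rw [hmval]
    have hlogn0 : (0:ℝ) ≤ Real.log n := Real.log_nonneg (by exact_mod_cast hn1)
    refine mul_le_mul hφlo hG (by positivity) ?_
    positivity

lemma final_combine (x llx ln eγ ε : ℝ) (m : ℕ) (hx0 : 0 < x) (hllx0 : 0 < llx)
    (hml : (31/32:ℝ)*x*((999/1000:ℝ)*ln) ≤ m) (hlogn : (96/100:ℝ)*llx ≤ ln)
    (heγ : eγ ≤ 1.84) (hε : 0 < ε) :
    ((1/2)*eγ - ε)*(x*llx) ≤ m := by
  have h1 : ((1/2)*eγ - ε) ≤ 92/100 := by norm_num at heγ ⊢; linarith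
  have hxllx : (0:ℝ) ≤ x * llx := by positivity
  have h2 : ((1/2)*eγ - ε)*(x*llx) ≤ (92/100)*(x*llx) := mul_le_mul_of_nonneg_right h1 hxllx
  have h3 : (92/100:ℝ)*(x*llx) ≤ (31/32)*x*((999/1000)*ln) := by
    have h := mul_le_mul_of_nonneg_left hlogn hx0.le
    nlinarith
  linarith


end AuxLargeM


set_option maxHeartbeats 1000000 in
set_option maxRecDepth 8000 in
open AuxLargeM in
/-- For every `ε > 0` there is `x₀` such that for all `x ≥ x₀` there exists a positive
integer `m` with `φ(m) ≤ x`, `m = 2^t * Q` for some `t ≥ 0` and odd squarefree `Q`,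
and `m ≥ ((1/2)·e^γ − ε) · x · log log x`. -/
theorem exists_large_m_two_pow_mul_squarefree (ε : ℝ) (hε : 0 < ε) :
    ∃ x₀ : ℝ, ∀ x : ℝ, x₀ ≤ x → ∃ m : ℕ, 0 < m ∧
      (Nat.totient m : ℝ) ≤ x ∧
      (∃ t : ℕ, ∃ Q : ℕ, 0 < Q ∧ Odd Q ∧ Squarefree Q ∧ m = 2 ^ t * Q) ∧
      ((1 / 2) * Real.exp Real.eulerMascheroniConstant - ε) * (x * Real.log (Real.log x))
        ≤ (m : ℝ) := by
  refine ⟨max ((2^18 * phiOdd 131073 + 131074 : ℕ) : ℝ) (Real.exp (Real.exp 200)),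
    fun x hx => ?_⟩
  have hxK : ((2^18 * phiOdd 131073 + 131074 : ℕ) : ℝ) ≤ x := le_trans (le_max_left _ _) hx
  have hxe : Real.exp (Real.exp 200) ≤ x := le_trans (le_max_right _ _) hx
  have hx0 : (0:ℝ) < x := lt_of_lt_of_le (Real.exp_pos _) hxe
  have hlx : Real.exp 200 ≤ Real.log x := (Real.le_log_iff_exp_le hx0).mpr hxe
  have hlx0 : (0:ℝ) < Real.log x := lt_of_lt_of_le (Real.exp_pos _) hlx
  have hllx : (200:ℝ) ≤ Real.log (Real.log x) := by
    rw [Real.le_log_iff_exp_le hlx0]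
    exact hlx
  have hllx0 : (0:ℝ) < Real.log (Real.log x) := by linarith
  have hfloorle : ((⌊x⌋₊ : ℕ) : ℝ) ≤ x := Nat.floor_le hx0.le
  have hfloorgt : x < ((⌊x⌋₊ : ℕ) : ℝ) + 1 := Nat.lt_floor_add_one x
  have hKle : 2^18 * phiOdd 131073 + 131074 ≤ ⌊x⌋₊ := Nat.le_floor (by exact_mod_cast hxK)
  set b := ⌊x⌋₊ with hbdef
  set n := Nat.findGreatest (fun k => 2^18 * phiOdd k ≤ b) b with hndef
  have hP0 : 2^18 * phiOdd 131073 ≤ b := le_trans (Nat.le_add_right _ _) hKle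
  have h131b : 131073 ≤ b := by omega
  have hn131 : 131073 ≤ n := Nat.le_findGreatest (P := fun k => 2^18 * phiOdd k ≤ b) h131b hP0
  have hn1 : 1 ≤ n := by omega
  have hPn : 2^18 * phiOdd n ≤ b :=
    Nat.findGreatest_spec (P := fun k => 2^18 * phiOdd k ≤ b) h131b hP0
  have hnb : n ≤ b := Nat.findGreatest_le b
  -- maximality
  have hPn1 : b < 2^18 * phiOdd (n+1) := by
    by_cases hc : n + 1 ≤ b
    · have h : ¬ (2^18 * phiOdd (n+1) ≤ b) :=
        Nat.findGreatest_is_greatest (P := fun k => 2^18 * phiOdd k ≤ b) (Nat.lt_succ_self n) hc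
      omega
    · obtain ⟨q, hq, hq1, hq2⟩ := Nat.exists_prime_lt_and_le_two_mul (n/2) (by omega)
      have hqE : q ∈ (n+1).primesBelow.erase 2 :=
        Finset.mem_erase.mpr ⟨by omega, Nat.mem_primesBelow.mpr ⟨by omega, hq⟩⟩
      have hone : ∀ p ∈ (n+1).primesBelow.erase 2, 1 ≤ p - 1 := by
        intro p hp
        have h2 := (Nat.prime_of_mem_primesBelow (Finset.mem_of_mem_erase hp)).two_le
        have h3 := (Finset.mem_erase.mp hp).1
        omega
      have hsingle : q - 1 ≤ phiOdd (n+1) := Finset.single_le_prod' hone hqE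
      have hdiv : n/2 ≤ phiOdd (n+1) := by omega
      have h2 : 2^18 * (n/2) ≤ 2^18 * phiOdd (n+1) := Nat.mul_le_mul_left _ hdiv
      omega
  -- upper bound via primorial
  have hF4 : phiOdd (n+1) ≤ 4^n := by
    calc phiOdd (n+1) ≤ ∏ p ∈ (n+1).primesBelow.erase 2, p :=
          Finset.prod_le_prod' (fun i _ => Nat.sub_le i 1)
      _ ≤ ∏ p ∈ (n+1).primesBelow, p :=
          Finset.prod_le_prod_of_subset_of_one_le' (Finset.erase_subset _ _)
            (fun p hp _ => (Nat.prime_of_mem_primesBelow hp).one_lt.le)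
      _ = primorial n := rfl
      _ ≤ 4^n := primorial_le_4_pow n
  have hxlt : x < (2:ℝ)^18 * 4^n := by
    have h1 : (b:ℝ) + 1 ≤ ((2^18 * phiOdd (n+1) : ℕ) : ℝ) := by exact_mod_cast hPn1
    have h2 : ((2^18 * phiOdd (n+1) : ℕ) : ℝ) ≤ ((2^18 * 4^n : ℕ) : ℝ) := by
      exact_mod_cast Nat.mul_le_mul_left _ hF4
    calc x < (b:ℝ)+1 := hfloorgt
      _ ≤ ((2^18 * phiOdd (n+1) : ℕ) : ℝ) := h1
      _ ≤ ((2^18 * 4^n : ℕ) : ℝ) := h2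
      _ = (2:ℝ)^18 * 4^n := by push_cast; ring
  have hlog2 : Real.log 2 ≤ 0.7 := by
    have := Real.log_two_lt_d9
    linarith
  have hnR : (131073:ℝ) ≤ (n:ℝ) := by exact_mod_cast hn131
  have hlogx20 : Real.log x ≤ 20 * n := by
    have h1 : Real.log x ≤ Real.log ((2:ℝ)^18 * 4^n) :=
      Real.log_le_log hx0 hxlt.le
    rw [Real.log_mul (by positivity) (by positivity), Real.log_pow, Real.log_pow] at h1
    have hlog4 : Real.log 4 = 2 * Real.log 2 := by
      rw [show (4:ℝ) = 2^2 by norm_num, Real.log_pow]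
      push_cast
      ring
    rw [hlog4] at h1
    push_cast at h1
    have hmul : (n:ℝ) * (2 * Real.log 2) ≤ (n:ℝ) * 1.4 := by
      refine mul_le_mul_of_nonneg_left (by linarith) (by positivity)
    linarith [hmul]
  have hlogn : (96/100:ℝ) * Real.log (Real.log x) ≤ Real.log n := by
    have hq : Real.log x / 20 ≤ (n:ℝ) := by linarith
    have hqpos : (0:ℝ) < Real.log x / 20 := by positivity
    have h1 : Real.log (Real.log x / 20) ≤ Real.log n := Real.log_le_log hqpos hq
    rw [Real.log_div hlx0.ne' (by norm_num)] at h1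
    have hlog20 : Real.log 20 ≤ 3 := by
      rw [Real.log_le_iff_le_exp (by norm_num)]
      have h : Real.exp 3 = (Real.exp 1)^3 := by
        rw [← Real.exp_nat_mul]; norm_num
      have h9 : (2.7182818283:ℝ)^3 ≤ (Real.exp 1)^3 :=
        pow_le_pow_left₀ (by norm_num) Real.exp_one_gt_d9.le 3
      calc (20:ℝ) ≤ 2.7182818283^3 := by norm_num
        _ ≤ (Real.exp 1)^3 := h9
        _ = Real.exp 3 := h.symm
    linarith
  -- choose granularity
  have hFpos : 0 < phiOdd n := by
    refine Finset.prod_pos (fun p hp => ?_)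
    have h2 := (Nat.prime_of_mem_primesBelow (Finset.mem_of_mem_erase hp)).two_le
    have h3 := (Finset.mem_erase.mp hp).1
    omega
  have hFR : (0:ℝ) < (phiOdd n : ℝ) := by exact_mod_cast hFpos
  have hR18 : (2:ℝ)^18 ≤ x / (phiOdd n : ℝ) := by
    rw [le_div_iff₀ hFR]
    have h : ((2^18 * phiOdd n : ℕ) : ℝ) ≤ (b:ℝ) := by exact_mod_cast hPn
    calc (2:ℝ)^18 * (phiOdd n : ℝ) = ((2^18 * phiOdd n : ℕ) : ℝ) := by push_cast; ring
      _ ≤ (b:ℝ) := h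
      _ ≤ x := hfloorle
  obtain ⟨t, d, hd0, hdc, hlo, hhi⟩ := gran (x / (phiOdd n : ℝ)) hR18
  have h2mem : 2 ∈ n.primesBelow := Nat.mem_primesBelow.mpr ⟨by omega, Nat.prime_two⟩
  have hGfull : Real.log n ≤ ∏ p ∈ n.primesBelow, ((1:ℝ) - (p:ℝ)⁻¹)⁻¹ :=
    log_le_prod_primesBelow n hn1
  have hsplit2 : ∏ p ∈ n.primesBelow, ((1:ℝ) - (p:ℝ)⁻¹)⁻¹
      = 2 * ∏ p ∈ n.primesBelow.erase 2, ((1:ℝ) - (p:ℝ)⁻¹)⁻¹ := by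
    rw [← Finset.mul_prod_erase _ _ h2mem]
    norm_num
  have hE : ∀ p ∈ n.primesBelow.erase 2, p.Prime :=
    fun p hp => Nat.prime_of_mem_primesBelow (Finset.mem_of_mem_erase hp)
  have hE2 : ∀ p ∈ n.primesBelow.erase 2, p ≠ 2 := fun p hp => (Finset.mem_erase.mp hp).1
  have hlogn0 : (0:ℝ) ≤ Real.log n := Real.log_nonneg (by exact_mod_cast hn1)
  rcases hdc with hd1 | ⟨p, hpp, hp2, hplb, hpub, hdp⟩
  · subst hd1
    have hG : (999/1000:ℝ) * Real.log n
        ≤ 2 * ∏ p ∈ n.primesBelow.erase 2, ((1:ℝ) - (p:ℝ)⁻¹)⁻¹ := by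
      rw [← hsplit2]
      linarith
    obtain ⟨m, hm0, hmx, hstr, hml⟩ := core n t 1 hn1 one_pos x hx0
      (n.primesBelow.erase 2) hE hE2 (one_mul _) hFpos hlo hhi hG
    exact ⟨m, hm0, hmx, hstr,
      final_combine x (Real.log (Real.log x)) (Real.log n) _ ε m hx0 hllx0 hml hlogn
        exp_gamma_le hε⟩
  · subst hdp
    have hpn : p < n := by omega
    have hpE : p ∈ n.primesBelow.erase 2 :=
      Finset.mem_erase.mpr ⟨hp2, Nat.mem_primesBelow.mpr ⟨hpn, hpp⟩⟩
    have hSp : ∀ q ∈ (n.primesBelow.erase 2).erase p, q.Prime :=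
      fun q hq => hE q (Finset.mem_of_mem_erase hq)
    have hS2 : ∀ q ∈ (n.primesBelow.erase 2).erase p, q ≠ 2 :=
      fun q hq => hE2 q (Finset.mem_of_mem_erase hq)
    have hprod : (p-1) * ∏ q ∈ (n.primesBelow.erase 2).erase p, (q - 1) = phiOdd n :=
      Finset.mul_prod_erase _ (fun q => q - 1) hpE
    have hd0' : 0 < p - 1 := by have := hpp.two_le; omega
    have hG : (999/1000:ℝ) * Real.log n
        ≤ 2 * ∏ q ∈ (n.primesBelow.erase 2).erase p, ((1:ℝ) - (q:ℝ)⁻¹)⁻¹ := by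
      have hsplitp : ∏ q ∈ n.primesBelow.erase 2, ((1:ℝ) - (q:ℝ)⁻¹)⁻¹
          = ((1:ℝ) - (p:ℝ)⁻¹)⁻¹
            * ∏ q ∈ (n.primesBelow.erase 2).erase p, ((1:ℝ) - (q:ℝ)⁻¹)⁻¹ :=
        (Finset.mul_prod_erase _ _ hpE).symm
      have hp16 : (65537:ℝ) ≤ (p:ℝ) := by exact_mod_cast (by omega : 65537 ≤ p)
      have hp0 : (0:ℝ) < (p:ℝ) := by linarith
      have hpinv : (p:ℝ)⁻¹ ≤ 1/65537 := by
        rw [inv_le_iff_one_le_mul₀ hp0]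
        linarith
      have hpinv0 : (0:ℝ) < (p:ℝ)⁻¹ := by positivity
      have hfactor : (999/1000:ℝ) ≤ 1 - (p:ℝ)⁻¹ := by linarith
      have hBnonneg : (0:ℝ) ≤ ∏ q ∈ n.primesBelow.erase 2, ((1:ℝ) - (q:ℝ)⁻¹)⁻¹ := by
        refine Finset.prod_nonneg (fun q hq => ?_)
        have h2 : (2:ℝ) ≤ (q:ℝ) := by exact_mod_cast (hE q hq).two_le
        have : (q:ℝ)⁻¹ ≤ 1/2 := by
          rw [inv_le_iff_one_le_mul₀ (by linarith)]
          linarith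
        have : (0:ℝ) ≤ 1 - (q:ℝ)⁻¹ := by linarith
        positivity
      -- 2 * ∏_S = (1 - 1/p) * (2 * ∏_E)
      have hkey : 2 * ∏ q ∈ (n.primesBelow.erase 2).erase p, ((1:ℝ) - (q:ℝ)⁻¹)⁻¹
          = (1 - (p:ℝ)⁻¹) * (2 * ∏ q ∈ n.primesBelow.erase 2, ((1:ℝ) - (q:ℝ)⁻¹)⁻¹) := by
        have hne : ((1:ℝ) - (p:ℝ)⁻¹) ≠ 0 := by linarith
        calc 2 * ∏ q ∈ (n.primesBelow.erase 2).erase p, ((1:ℝ) - (q:ℝ)⁻¹)⁻¹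
            = ((1 - (p:ℝ)⁻¹) * ((1:ℝ) - (p:ℝ)⁻¹)⁻¹)
              * (2 * ∏ q ∈ (n.primesBelow.erase 2).erase p, ((1:ℝ) - (q:ℝ)⁻¹)⁻¹) := by
              rw [mul_inv_cancel₀ hne, one_mul]
          _ = (1 - (p:ℝ)⁻¹) * (2 * (((1:ℝ) - (p:ℝ)⁻¹)⁻¹
              * ∏ q ∈ (n.primesBelow.erase 2).erase p, ((1:ℝ) - (q:ℝ)⁻¹)⁻¹)) := by ring
          _ = (1 - (p:ℝ)⁻¹) * (2 * ∏ q ∈ n.primesBelow.erase 2, ((1:ℝ) - (q:ℝ)⁻¹)⁻¹) := by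
              rw [← hsplitp]
      rw [hkey]
      have h2E : Real.log n ≤ 2 * ∏ q ∈ n.primesBelow.erase 2, ((1:ℝ) - (q:ℝ)⁻¹)⁻¹ := by
        rw [← hsplit2]
        exact hGfull
      calc (999/1000:ℝ) * Real.log n
          ≤ (1 - (p:ℝ)⁻¹) * (2 * ∏ q ∈ n.primesBelow.erase 2, ((1:ℝ) - (q:ℝ)⁻¹)⁻¹) := by
            refine mul_le_mul hfactor h2E hlogn0 (by linarith)
        _ = _ := rfl
    obtain ⟨m, hm0, hmx, hstr, hml⟩ := core n t (p-1) hn1 hd0' x hx0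
      ((n.primesBelow.erase 2).erase p) hSp hS2 hprod hFpos hlo hhi hG
    exact ⟨m, hm0, hmx, hstr,
      final_combine x (Real.log (Real.log x)) (Real.log n) _ ε m hx0 hllx0 hml hlogn
        exp_gamma_le hε⟩
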